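/- Let d ≥ 1, let n be a real number, and let g : ℝ^d → ℂ be measurable. For all real t > 0 and Re > 0, ∫_{ℝ^d} (1 + ‖ξ‖²)^n · exp(−2t‖ξ‖²/Re) · |g(ξ)|² dξ ≤ (√(Re/(2et)) + 1)² · ∫_{ℝ^d} (1 + ‖ξ‖²)^{n−1} · |g(ξ)|² dξ (an inequality in [0, ∞], using the Lebesgue integral). -/

import Mathlib

open MeasureTheory

lemma aux_mul_exp_le (a x : ℝ) (ha : 0 < a) (hx : 0 ≤ x) :
    x * Real.exp (-(a * x)) ≤ 1 / (a * Real.exp 1) := by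
  have key : a * x * Real.exp (-(a * x)) ≤ Real.exp (-1) := by
    have h1 : a * x ≤ Real.exp (a * x - 1) := by
      have := Real.add_one_le_exp (a * x - 1)
      linarith
    calc a * x * Real.exp (-(a * x)) ≤ Real.exp (a * x - 1) * Real.exp (-(a * x)) := by
          apply mul_le_mul_of_nonneg_right h1 (Real.exp_nonneg _)
      _ = Real.exp (-1) := by rw [← Real.exp_add]; ring_nf
  have hexp : Real.exp (-1) = 1 / Real.exp 1 := by
    rw [Real.exp_neg]; ring
  rw [hexp] at key
  have key' : a * x * Real.exp (-(a * x)) * Real.exp 1 ≤ 1 := by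
    have := mul_le_mul_of_nonneg_right key (Real.exp_nonneg 1)
    rwa [one_div_mul_cancel (ne_of_gt (Real.exp_pos 1))] at this
  rw [le_div_iff₀ (by positivity)]
  nlinarith [key']

lemma aux_key (t Re x : ℝ) (ht : 0 < t) (hRe : 0 < Re) (hx : 0 ≤ x) :
    (1 + x) * Real.exp (-2 * t * x / Re) ≤ (Real.sqrt (Re / (2 * Real.exp 1 * t)) + 1) ^ 2 := by
  have ha : 0 < 2 * t / Re := by positivity
  have h1 : -2 * t * x / Re = -((2 * t / Re) * x) := by ring
  rw [h1]
  have h2 := aux_mul_exp_le (2 * t / Re) x ha hx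
  have h3 : Real.exp (-((2 * t / Re) * x)) ≤ 1 := by
    rw [← Real.exp_zero]
    apply Real.exp_le_exp.mpr
    nlinarith
  have h4 : 1 / (2 * t / Re * Real.exp 1) = Re / (2 * Real.exp 1 * t) := by
    rw [div_mul_eq_mul_div, one_div_div]
    ring_nf
  have h5 : Real.sqrt (Re / (2 * Real.exp 1 * t)) ^ 2 = Re / (2 * Real.exp 1 * t) := by
    rw [Real.sq_sqrt (by positivity)]
  have hsq : 0 ≤ Real.sqrt (Re / (2 * Real.exp 1 * t)) := Real.sqrt_nonneg _
  have hexp0 : 0 ≤ Real.exp (-((2 * t / Re) * x)) := Real.exp_nonneg _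
  nlinarith [h2, h3]

/-- Weighted `L²` smoothing bound for the heat-semigroup symbol: for `d ≥ 1`, real `n`,
measurable `g : ℝ^d → ℂ`, and all real `t > 0`, `Re > 0`,
`∫ (1+‖ξ‖²)^n e^{−2t‖ξ‖²/Re} |g(ξ)|² dξ ≤ (√(Re/(2et)) + 1)² ∫ (1+‖ξ‖²)^{n−1} |g(ξ)|² dξ`,
as an inequality in `[0,∞]`. -/
theorem stmt_3 (d : ℕ) (hd : 1 ≤ d) (n : ℝ) (g : EuclideanSpace ℝ (Fin d) → ℂ)
    (hg : Measurable g) (t Re : ℝ) (ht : 0 < t) (hRe : 0 < Re) :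
    ∫⁻ ξ, ENNReal.ofReal
        ((1 + ‖ξ‖ ^ 2) ^ n * Real.exp (-2 * t * ‖ξ‖ ^ 2 / Re) * ‖g ξ‖ ^ 2)
      ≤ ENNReal.ofReal ((Real.sqrt (Re / (2 * Real.exp 1 * t)) + 1) ^ 2) *
        ∫⁻ ξ, ENNReal.ofReal ((1 + ‖ξ‖ ^ 2) ^ (n - 1) * ‖g ξ‖ ^ 2) := by
  rw [← lintegral_const_mul' _ _ ENNReal.ofReal_ne_top]
  apply lintegral_mono
  intro ξ
  set x := ‖ξ‖ ^ 2 with hxdef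
  have hx : (0:ℝ) ≤ x := by positivity
  have hC : (0:ℝ) ≤ (Real.sqrt (Re / (2 * Real.exp 1 * t)) + 1) ^ 2 := by positivity
  dsimp only
  rw [← ENNReal.ofReal_mul hC]
  apply ENNReal.ofReal_le_ofReal
  have h1x : (0:ℝ) < 1 + x := by linarith
  have hsplit : (1 + x) ^ n = (1 + x) ^ (n - 1) * (1 + x) := by
    have h := Real.rpow_add h1x (n - 1) 1
    rw [Real.rpow_one] at h
    rw [← h]; norm_num
  rw [hsplit]
  have key := aux_key t Re x ht hRe hx
  have hpow : (0:ℝ) ≤ (1 + x) ^ (n - 1) := Real.rpow_nonneg (le_of_lt h1x) _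
  have habs : (0:ℝ) ≤ ‖g ξ‖ ^ 2 := by positivity
  calc (1 + x) ^ (n - 1) * (1 + x) * Real.exp (-2 * t * x / Re) * ‖g ξ‖ ^ 2
      = ((1 + x) * Real.exp (-2 * t * x / Re)) * ((1 + x) ^ (n - 1) * ‖g ξ‖ ^ 2) := by
        ring
    _ ≤ (Real.sqrt (Re / (2 * Real.exp 1 * t)) + 1) ^ 2 *
        ((1 + x) ^ (n - 1) * ‖g ξ‖ ^ 2) := by
        apply mul_le_mul_of_nonneg_right key (by positivity)
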